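/- Let p be a continuous τ-periodic function on [τ,∞) that is part of a positive C¹ τ-periodic solution (p,q) of the Lotka–Volterra ODE p' = (β₀e^{-μ₀τ}-μ₀)p - γ₀pq, q' = αγ₀pq - δq, with (p,q) not constant. Then there exists t* ∈ [τ,2τ] with p(t*) = X*, and for any such t*, q(t*) ≠ y*. -/

import Mathlib

/-- Entropy-type inequality: the function `x ↦ (b/m)*x - b*log x` on `(0,∞)`
attains its minimum at `x = m`. -/
lemma ent_le (b m x : ℝ) (hb : 0 < b) (hm : 0 < m) (hx : 0 < x) :
    b / m * m - b * Real.log m ≤ b / m * x - b * Real.log x := by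
  have hu : 0 < x / m := div_pos hx hm
  have hlog : Real.log x - Real.log m = Real.log (x / m) :=
    (Real.log_div hx.ne' hm.ne').symm
  have h1 : Real.log (x / m) ≤ x / m - 1 := Real.log_le_sub_one_of_pos hu
  have hbm : b / m * m = b := by field_simp
  have hbx : b / m * x = b * (x / m) := by field_simp
  nlinarith [mul_le_mul_of_nonneg_left h1 hb.le]

lemma ent_eq (b m x : ℝ) (hb : 0 < b) (hm : 0 < m) (hx : 0 < x)
    (h : b / m * x - b * Real.log x ≤ b / m * m - b * Real.log m) : x = m := by
  by_contra hne
  have hu : 0 < x / m := div_pos hx hm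
  have hu1 : x / m ≠ 1 := by
    intro h1
    exact hne (by field_simp at h1; linarith)
  have h1 : Real.log (x / m) < x / m - 1 := Real.log_lt_sub_one_of_pos hu hu1
  have hlog : Real.log x - Real.log m = Real.log (x / m) :=
    (Real.log_div hx.ne' hm.ne').symm
  have hbm : b / m * m = b := by field_simp
  have hbx : b / m * x = b * (x / m) := by field_simp
  nlinarith [mul_lt_mul_of_pos_left h1 hb]

theorem periodic_orbit_crosses_Xstar_with_q_ne_ystar
    (β₀ μ₀ γ₀ δ τ α : ℝ)
    (hβ : 0 < β₀) (hμ : 0 < μ₀) (hγ : 0 < γ₀) (hδ : 0 < δ) (hτ : 0 < τ)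
    (hα : 0 < α ∧ α < 1) (hR : β₀ * Real.exp (-μ₀ * τ) > μ₀)
    (Xs ys : ℝ) (hXs : Xs = δ / (α * γ₀))
    (hys : ys = (β₀ * Real.exp (-μ₀ * τ) - μ₀) / γ₀)
    (p q : ℝ → ℝ)
    (hppos : ∀ t ≥ τ, 0 < p t) (hqpos : ∀ t ≥ τ, 0 < q t)
    (hpC : ContinuousOn p (Set.Ici τ))
    (hpode : ∀ t ≥ τ, HasDerivAt p
      ((β₀ * Real.exp (-μ₀ * τ) - μ₀) * p t - γ₀ * p t * q t) t)
    (hqode : ∀ t ≥ τ, HasDerivAt q (α * γ₀ * p t * q t - δ * q t) t)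
    (hper : ∀ t ≥ τ, p (t + τ) = p t ∧ q (t + τ) = q t)
    (hnonconst : ¬ (∀ t ≥ τ, ∀ s ≥ τ, p t = p s ∧ q t = q s)) :
    (∃ ts ∈ Set.Icc τ (2 * τ), p ts = Xs) ∧
    (∀ ts ∈ Set.Icc τ (2 * τ), p ts = Xs → q ts ≠ ys) := by
  obtain ⟨hα0, hα1⟩ := hα
  set r : ℝ := β₀ * Real.exp (-μ₀ * τ) - μ₀ with hr
  have hrpos : 0 < r := sub_pos.mpr hR
  have hαγ : 0 < α * γ₀ := mul_pos hα0 hγ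
  have hXsp : 0 < Xs := by rw [hXs]; positivity
  have hysp : 0 < ys := by rw [hys]; positivity
  have hXsval : α * γ₀ * Xs = δ := by rw [hXs]; field_simp
  have hysval : γ₀ * ys = r := by rw [hys]; field_simp
  have hq2 : q (2 * τ) = q τ := by
    have := (hper τ le_rfl).2
    rw [two_mul]; exact this
  have hτ2 : τ ≤ 2 * τ := by linarith
  have hqC : ContinuousOn q (Set.Icc τ (2 * τ)) := fun t ht =>
    ((hqode t ht.1).continuousAt).continuousWithinAt
  -- Part 1: existence of a crossing
  have part1 : ∃ ts ∈ Set.Icc τ (2 * τ), p ts = Xs := by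
    by_contra hno
    push_neg at hno
    have hpCc : ContinuousOn p (Set.Icc τ (2 * τ)) :=
      hpC.mono (Set.Icc_subset_Ici_self)
    have hne : p τ ≠ Xs := hno τ ⟨le_rfl, hτ2⟩
    have hsign : (∀ t ∈ Set.Icc τ (2 * τ), p t < Xs) ∨
        (∀ t ∈ Set.Icc τ (2 * τ), Xs < p t) := by
      rcases hne.lt_or_gt with hlt | hgt
      · left
        intro t ht
        by_contra hge
        push_neg at hge
        have hsub : Set.Icc τ t ⊆ Set.Icc τ (2 * τ) :=
          Set.Icc_subset_Icc le_rfl ht.2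
        have := intermediate_value_Icc ht.1 (hpCc.mono hsub)
          (Set.mem_Icc.mpr ⟨hlt.le, hge⟩)
        obtain ⟨c, hc, hpc⟩ := this
        exact hno c (hsub hc) hpc
      · right
        intro t ht
        by_contra hge
        push_neg at hge
        have hsub : Set.Icc τ t ⊆ Set.Icc τ (2 * τ) :=
          Set.Icc_subset_Icc le_rfl ht.2
        have := intermediate_value_Icc' ht.1 (hpCc.mono hsub)
          (Set.mem_Icc.mpr ⟨hge, hgt.le⟩)
        obtain ⟨c, hc, hpc⟩ := this
        exact hno c (hsub hc) hpc
    rcases hsign with hlt | hgt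
    · -- p < Xs on the interval ⇒ q strictly decreasing ⇒ contradiction
      have hanti : StrictAntiOn q (Set.Icc τ (2 * τ)) := by
        apply strictAntiOn_of_deriv_neg (convex_Icc _ _) hqC
        intro x hx
        rw [interior_Icc] at hx
        have hx1 : τ ≤ x := hx.1.le
        rw [(hqode x hx1).deriv]
        have hplt : p x < Xs := hlt x ⟨hx1, hx.2.le⟩
        have hq : 0 < q x := hqpos x hx1
        nlinarith [mul_lt_mul_of_pos_left hplt hαγ]
      have := hanti ⟨le_rfl, hτ2⟩ ⟨hτ2, le_rfl⟩ (by linarith)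
      rw [hq2] at this
      exact lt_irrefl _ this
    · have hmono : StrictMonoOn q (Set.Icc τ (2 * τ)) := by
        apply strictMonoOn_of_deriv_pos (convex_Icc _ _) hqC
        intro x hx
        rw [interior_Icc] at hx
        have hx1 : τ ≤ x := hx.1.le
        rw [(hqode x hx1).deriv]
        have hplt : Xs < p x := hgt x ⟨hx1, hx.2.le⟩
        have hq : 0 < q x := hqpos x hx1
        nlinarith [mul_lt_mul_of_pos_left hplt hαγ]
      have := hmono ⟨le_rfl, hτ2⟩ ⟨hτ2, le_rfl⟩ (by linarith)
      rw [hq2] at this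
      exact lt_irrefl _ this
  refine ⟨part1, ?_⟩
  -- Part 2: no crossing at the equilibrium value
  intro ts hts hpts hqts
  -- Energy function
  set E : ℝ → ℝ := fun t => (α * γ₀ * p t - δ * Real.log (p t)) +
      (γ₀ * q t - r * Real.log (q t)) with hE
  have hEderiv : ∀ t ≥ τ, HasDerivAt E 0 t := by
    intro t ht
    have hp := hpode t ht
    have hq := hqode t ht
    have hpne : p t ≠ 0 := (hppos t ht).ne'
    have hqne : q t ≠ 0 := (hqpos t ht).ne'
    have h1 : HasDerivAt (fun s => α * γ₀ * p s - δ * Real.log (p s))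
        (α * γ₀ * (r * p t - γ₀ * p t * q t) -
          δ * ((r * p t - γ₀ * p t * q t) / p t)) t :=
      ((hp.const_mul (α * γ₀)).sub ((hp.log hpne).const_mul δ))
    have h2 : HasDerivAt (fun s => γ₀ * q s - r * Real.log (q s))
        (γ₀ * (α * γ₀ * p t * q t - δ * q t) -
          r * ((α * γ₀ * p t * q t - δ * q t) / q t)) t :=
      ((hq.const_mul γ₀).sub ((hq.log hqne).const_mul r))
    have := h1.add h2
    refine this.congr_deriv ?_
    field_simp
    ring
  have hEconst : ∀ t ≥ τ, E t = E τ := by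
    intro t ht
    have hcont : ContinuousOn E (Set.Icc τ t) := fun s hs =>
      ((hEderiv s hs.1).continuousAt).continuousWithinAt
    have hderiv : ∀ s ∈ Set.Ico τ t, HasDerivWithinAt E 0 (Set.Ici s) s :=
      fun s hs => (hEderiv s hs.1).hasDerivWithinAt
    exact constant_of_has_deriv_right_zero hcont hderiv t ⟨ht, le_rfl⟩
  -- E is constant and equals its minimum value at ts
  have hEts : E ts = (α * γ₀ * Xs - δ * Real.log Xs) + (γ₀ * ys - r * Real.log ys) := by
    simp only [hE, hpts, hqts]
  have haXs : α * γ₀ = δ / Xs := by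
    rw [eq_div_iff hXsp.ne']; linarith [hXsval]
  have hgys : γ₀ = r / ys := by
    rw [eq_div_iff hysp.ne']; linarith [hysval]
  -- For every t ≥ τ, p t = Xs and q t = ys
  have hall : ∀ t ≥ τ, p t = Xs ∧ q t = ys := by
    intro t ht
    have hEt : E t = E ts := by
      rw [hEconst t ht, hEconst ts hts.1]
    rw [hEts] at hEt
    have h1 := ent_le δ Xs (p t) hδ hXsp (hppos t ht)
    have h2 := ent_le r ys (q t) hrpos hysp (hqpos t ht)
    rw [← haXs] at h1
    rw [← hgys] at h2
    have hEt' : (α * γ₀ * p t - δ * Real.log (p t)) +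
        (γ₀ * q t - r * Real.log (q t)) =
        (α * γ₀ * Xs - δ * Real.log Xs) + (γ₀ * ys - r * Real.log ys) := hEt
    constructor
    · apply ent_eq δ Xs (p t) hδ hXsp (hppos t ht)
      rw [← haXs]; linarith
    · apply ent_eq r ys (q t) hrpos hysp (hqpos t ht)
      rw [← hgys]; linarith
  apply hnonconst
  intro t ht s hs
  obtain ⟨hpt, hqt⟩ := hall t ht
  obtain ⟨hps, hqs⟩ := hall s hs
  rw [hpt, hqt, hps, hqs]
  exact ⟨rfl, rfl⟩
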